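/- Let S_n (n ≥ 3) act on V = ℂ^n by permuting the standard basis, and fix a, b ∈ ℂ. For each 3-cycle (i j k), define an alternating bilinear map κ_{(ijk)} : V × V → V by κ_{(ijk)}(e_i, e_j) = κ_{(ijk)}(e_j, e_k) = κ_{(ijk)}(e_k, e_i) = a(e_i + e_j + e_k) + b·Σ_{l ∉ {i,j,k}} e_l, and κ_{(ijk)}(e_l, e_m) = 0 whenever {l, m} ⊄ {i, j, k}. Then the image of κ_{(ijk)} is contained in the fixed space V^{(ijk)}, and the family is S_n-invariant: κ_{σ(ijk)σ⁻¹}(σ·u, σ·v) = σ·κ_{(ijk)}(u, v) for all σ ∈ S_n and u, v ∈ V. -/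

import Mathlib

/-- The action of a permutation on `ℂ^n` by permuting coordinates. -/
noncomputable def permAct {n : ℕ} (σ : Equiv.Perm (Fin n)) (v : Fin n → ℂ) : Fin n → ℂ :=
  fun i => v (σ⁻¹ i)

/-- The fixed point space of a set of permutations acting on `ℂ^n`. -/
noncomputable def fixedSpace {n : ℕ} (S : Set (Equiv.Perm (Fin n))) : Submodule ℂ (Fin n → ℂ) where
  carrier := {v | ∀ g ∈ S, ∀ i, v (g i) = v i}
  add_mem' := fun ha hb g hg i => by simp [ha g hg i, hb g hg i]
  zero_mem' := fun g hg i => rfl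
  smul_mem' := fun c v hv g hg i => by simp [hv g hg i]

/-- For each 3-cycle `(i j k)` in `Sₙ` (n ≥ 3), the alternating bilinear map
`κ_{(ijk)}` with `κ_{(ijk)}(e_i,e_j) = κ_{(ijk)}(e_j,e_k) = κ_{(ijk)}(e_k,e_i)
= a(e_i+e_j+e_k) + b·Σ_{l∉{i,j,k}} e_l` (and zero on other basis pairs) has image
in the fixed space `V^{(ijk)}` and the family is `Sₙ`-invariant. -/
theorem stmt13 (n : ℕ) (hn : 3 ≤ n) (a b : ℂ) :
    let e : Fin n → (Fin n → ℂ) := fun i => Pi.single i 1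
    -- a(e_i + e_j + e_k) + b Σ_{l ∉ {i,j,k}} e_l
    let w : Fin n → Fin n → Fin n → (Fin n → ℂ) :=
      fun i j k l => if l = i ∨ l = j ∨ l = k then a else b
    -- bilinear extension of the values on basis vectors
    let κ : Fin n → Fin n → Fin n → (Fin n → ℂ) → (Fin n → ℂ) → (Fin n → ℂ) :=
      fun i j k u v =>
        (u i * v j - u j * v i + u j * v k - u k * v j + u k * v i - u i * v k) • w i j k
    -- the 3-cycle (i j k)
    let cyc : Fin n → Fin n → Fin n → Equiv.Perm (Fin n) :=
      fun i j k => Equiv.swap i j * Equiv.swap j k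
    ∀ i j k : Fin n, i ≠ j → j ≠ k → i ≠ k →
      (κ i j k (e i) (e j) = a • (e i + e j + e k)
            + b • ∑ l ∈ Finset.univ.filter (fun l => l ≠ i ∧ l ≠ j ∧ l ≠ k), e l)
      ∧ κ i j k (e j) (e k) = κ i j k (e i) (e j)
      ∧ κ i j k (e k) (e i) = κ i j k (e i) (e j)
      ∧ (∀ l m : Fin n, ¬ ({l, m} : Set (Fin n)) ⊆ {i, j, k} → κ i j k (e l) (e m) = 0)
      ∧ (∀ u v : Fin n → ℂ, κ i j k u v ∈ fixedSpace {cyc i j k})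
      ∧ (∀ (σ : Equiv.Perm (Fin n)) (u v : Fin n → ℂ),
          κ (σ i) (σ j) (σ k) (permAct σ u) (permAct σ v) = permAct σ (κ i j k u v)) := by

  intro e w κ cyc i j k hij hjk hik
  have hji := hij.symm; have hkj := hjk.symm; have hki := hik.symm
  -- the coefficient on basis pairs
  have hco : ∀ u v : Fin n → ℂ,
      κ i j k u v = (u i * v j - u j * v i + u j * v k - u k * v j + u k * v i - u i * v k) • w i j k :=
    fun u v => rfl
  have h1 : κ i j k (e i) (e j) = w i j k := by
    simp [κ, e, Pi.single_apply, hij, hjk, hik, hji, hkj, hki]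
  have hw : w i j k = a • (e i + e j + e k)
      + b • ∑ l ∈ Finset.univ.filter (fun l => l ≠ i ∧ l ≠ j ∧ l ≠ k), e l := by
    funext l
    by_cases hl : l = i ∨ l = j ∨ l = k
    · have hsum : (∑ m ∈ Finset.univ.filter (fun m => m ≠ i ∧ m ≠ j ∧ m ≠ k), e m) l = 0 := by
        rw [Finset.sum_apply]
        apply Finset.sum_eq_zero
        intro m hm
        simp only [Finset.mem_filter] at hm
        have : m ≠ l := by rcases hl with h|h|h <;> subst h <;> tauto
        simp [e, Pi.single_apply, this]
      simp only [w, if_pos hl, Pi.add_apply, Pi.smul_apply, hsum, smul_zero, add_zero]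
      rcases hl with h|h|h <;> subst h <;>
        simp [e, Pi.single_apply, hij, hjk, hik, hji, hkj, hki]
    · push_neg at hl
      obtain ⟨hli, hlj, hlk⟩ := hl
      have hsum : (∑ m ∈ Finset.univ.filter (fun m => m ≠ i ∧ m ≠ j ∧ m ≠ k), e m) l = 1 := by
        rw [Finset.sum_apply, Finset.sum_eq_single l]
        · simp [e]
        · intro m hm hml; simp [e, Pi.single_apply, hml]
        · intro h; exact absurd (by simp [hli, hlj, hlk]) h
      simp [w, hli, hlj, hlk, e, Pi.single_apply, hij.symm ∘ Eq.symm, hsum]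
  refine ⟨h1.trans hw, ?_, ?_, ?_, ?_, ?_⟩
  · rw [h1]; simp [κ, e, Pi.single_apply, hij, hjk, hik, hji, hkj, hki]
  · rw [h1]; simp [κ, e, Pi.single_apply, hij, hjk, hik, hji, hkj, hki]
  · intro l m hlm
    have : l ∉ ({i, j, k} : Set (Fin n)) ∨ m ∉ ({i, j, k} : Set (Fin n)) := by
      by_contra h; push_neg at h
      exact hlm (fun x hx => by rcases hx with rfl | rfl; exacts [h.1, h.2])
    rcases this with h | h <;>
    · simp only [Set.mem_insert_iff, Set.mem_singleton_iff, not_or] at h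
      obtain ⟨h1, h2, h3⟩ := h
      have : (e l) i * (e m) j - (e l) j * (e m) i + (e l) j * (e m) k
          - (e l) k * (e m) j + (e l) k * (e m) i - (e l) i * (e m) k = 0 := by
        simp [e, Pi.single_apply, (Ne.symm h1), (Ne.symm h2), (Ne.symm h3)]
      rw [hco, this, zero_smul]
  · intro u v g hg x
    simp only [Set.mem_singleton_iff] at hg
    subst hg
    have hwfix : w i j k (cyc i j k x) = w i j k x := by
      have hc : ∀ y, cyc i j k y = if y = i then j else if y = j then k else if y = k then i else y := by
        intro y
        simp only [cyc, Equiv.Perm.mul_apply]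
        by_cases hy1 : y = i
        · subst hy1; rw [Equiv.swap_apply_of_ne_of_ne hij hik, Equiv.swap_apply_left]; simp [hij]
        by_cases hy2 : y = j
        · subst hy2; rw [Equiv.swap_apply_left, Equiv.swap_apply_of_ne_of_ne hki hkj]
          simp [hjk, hji]
        by_cases hy3 : y = k
        · subst hy3; rw [Equiv.swap_apply_right, Equiv.swap_apply_right]; simp [hki, hkj]
        · rw [Equiv.swap_apply_of_ne_of_ne hy2 hy3, Equiv.swap_apply_of_ne_of_ne hy1 hy2]
          simp [hy1, hy2, hy3]
      rw [hc]
      by_cases h1 : x = i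
      · subst h1; simp [w, hij]
      by_cases h2 : x = j
      · subst h2; simp [w, hji, hjk]
      by_cases h3 : x = k
      · subst h3; simp [w, hki, hkj, hij]
      · simp [w, h1, h2, h3]
    show (κ i j k u v) (cyc i j k x) = (κ i j k u v) x
    rw [hco]
    simp only [Pi.smul_apply, hwfix]
  · intro σ u v
    funext l
    have hu : ∀ x, permAct σ u (σ x) = u x := fun x => by simp [permAct]
    have hv : ∀ x, permAct σ v (σ x) = v x := fun x => by simp [permAct]
    have hiff : ∀ x : Fin n, l = σ x ↔ σ⁻¹ l = x := fun x =>
      ⟨fun h => by rw [h]; simp, fun h => by rw [← h]; simp⟩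
    have hww : w (σ i) (σ j) (σ k) l = w i j k (σ⁻¹ l) := by
      simp only [w, hiff]
    show (_ • w (σ i) (σ j) (σ k)) l = (κ i j k u v) (σ⁻¹ l)
    rw [hco]
    simp only [Pi.smul_apply, hu, hv, permAct, hww, Equiv.Perm.inv_def, Equiv.symm_apply_apply]
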